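/- arXiv:1612.05215 — 7 statements merged into one kernel-verified Lean document; each statement's English description precedes it below -/
import Mathlib

section
/- Let H = [[A, X],[X†, B]] be Hermitian with A positive definite. Then the Schur complement H/A = B − X† A⁻¹ X is the supremum, in the Löwner order, of the set of Hermitian matrices B̃ such that H − 0⊕B̃ is positive definite; i.e., H/A is an upper bound of this set, and it is the least such upper bound. -/
open Matrix
open scoped ComplexOrder

/-- Variational characterisation of the Schur complement: for `H = [[A, X],[Xᴴ, B]]` Hermitian
with `A > 0`, the Schur complement `B - Xᴴ A⁻¹ X` is the supremum in the Löwner order of the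
Hermitian matrices `B̃` with `H - 0 ⊕ B̃ > 0`. -/
theorem schur_complement_variational (m n : ℕ)
    (A : Matrix (Fin m) (Fin m) ℂ) (B : Matrix (Fin n) (Fin n) ℂ)
    (X : Matrix (Fin m) (Fin n) ℂ)
    (hA : A.PosDef)
    (hH : (Matrix.fromBlocks A X Xᴴ B).IsHermitian) :
    (∀ Bt : Matrix (Fin n) (Fin n) ℂ, Bt.IsHermitian →
        (Matrix.fromBlocks A X Xᴴ B - Matrix.fromBlocks 0 0 0 Bt).PosDef →
        ((B - Xᴴ * A⁻¹ * X) - Bt).PosSemidef) ∧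
      (∀ C : Matrix (Fin n) (Fin n) ℂ, C.IsHermitian →
        (∀ Bt : Matrix (Fin n) (Fin n) ℂ, Bt.IsHermitian →
          (Matrix.fromBlocks A X Xᴴ B - Matrix.fromBlocks 0 0 0 Bt).PosDef →
          (C - Bt).PosSemidef) →
        (C - (B - Xᴴ * A⁻¹ * X)).PosSemidef) := by
  haveI : Invertible A := hA.isUnit.invertible
  have hblock : ∀ Bt : Matrix (Fin n) (Fin n) ℂ,
      Matrix.fromBlocks A X Xᴴ B - Matrix.fromBlocks 0 0 0 Bt
        = Matrix.fromBlocks A X Xᴴ (B - Bt) := by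
    intro Bt; ext (i|i) (j|j) <;> simp [fromBlocks]
  have hB : B.IsHermitian := (isHermitian_fromBlocks_iff.mp hH).2.2.2
  have hXAX : (Xᴴ * A⁻¹ * X).IsHermitian :=
    isHermitian_conjTranspose_mul_mul X hA.1.inv
  constructor
  · intro Bt hBt hpos
    rw [hblock] at hpos
    have h1 := (PosDef.fromBlocks₁₁ X (B - Bt) hA).mp hpos.posSemidef
    have : B - Bt - Xᴴ * A⁻¹ * X = B - Xᴴ * A⁻¹ * X - Bt := by abel
    rwa [this] at h1
  · intro C hC hub
    have hM : (C - (B - Xᴴ * A⁻¹ * X)).IsHermitian := hC.sub (hB.sub hXAX)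
    refine PosSemidef.of_dotProduct_mulVec_nonneg hM (fun x => ?_)
    -- key: for every ε > 0, 0 ≤ quadratic form + ε * ‖x‖²
    have key : ∀ ε : ℝ, 0 < ε →
        (0:ℂ) ≤ star x ⬝ᵥ ((C - (B - Xᴴ * A⁻¹ * X)) *ᵥ x) + (ε:ℂ) * (star x ⬝ᵥ x) := by
      intro ε hε
      set Bt : Matrix (Fin n) (Fin n) ℂ := B - Xᴴ * A⁻¹ * X - (ε:ℂ) • 1 with hBtdef
      have hBtH : Bt.IsHermitian := by
        rw [hBtdef]
        refine (hB.sub hXAX).sub ?_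
        rw [Matrix.IsHermitian, conjTranspose_smul, conjTranspose_one]
        norm_num [Complex.star_def, Complex.conj_ofReal]
      have hDeq : B - Bt = Xᴴ * A⁻¹ * X + (ε:ℂ) • 1 := by rw [hBtdef]; abel
      have hSchur : B - Bt - Xᴴ * A⁻¹ * X = (ε:ℂ) • 1 := by rw [hDeq]; abel
      have hεpos : ((ε:ℂ) • (1 : Matrix (Fin n) (Fin n) ℂ)).PosDef := by
        refine PosDef.of_dotProduct_mulVec_pos ?_ (fun y hy => ?_)
        · rw [Matrix.IsHermitian, conjTranspose_smul, conjTranspose_one]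
          norm_num [Complex.star_def, Complex.conj_ofReal]
        · have h1 : star y ⬝ᵥ (((ε:ℂ) • (1 : Matrix (Fin n) (Fin n) ℂ)) *ᵥ y)
              = (ε:ℂ) * (star y ⬝ᵥ y) := by
            simp [smul_mulVec, dotProduct_smul, smul_eq_mul]
          rw [h1]
          have h2 : (0:ℂ) < star y ⬝ᵥ y := by
            rcases (dotProduct_star_self_nonneg y).lt_or_eq with h | h
            · exact h
            · exact absurd (dotProduct_star_self_eq_zero.mp h.symm) hy
          have h3 : (0:ℂ) < (ε:ℂ) := by
            rw [Complex.lt_def]; simp [hε]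
          exact mul_pos h3 h2
      have hpos : (Matrix.fromBlocks A X Xᴴ B - Matrix.fromBlocks 0 0 0 Bt).PosDef := by
        rw [hblock]
        refine PosDef.of_dotProduct_mulVec_pos ?_ (fun z hz => ?_)
        · rw [IsHermitian.fromBlocks₁₁ _ _ hA.1, hSchur]; exact hεpos.1
        · rw [dotProduct_mulVec, ← Sum.elim_comp_inl_inr z,
            schur_complement_eq₁₁ X (B - Bt) _ _ hA.1, hSchur]
          by_cases hy : z ∘ Sum.inr = 0
          · have hx : z ∘ Sum.inl ≠ 0 := by
              intro hx
              apply hz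
              ext (i|i)
              · exact congrFun hx i
              · exact congrFun hy i
            rw [hy]
            simp only [mulVec_zero, add_zero, star_zero, zero_vecMul, zero_dotProduct]
            have := hA.dotProduct_mulVec_pos hx
            rwa [dotProduct_mulVec] at this
          · refine add_pos_of_nonneg_of_pos ?_ ?_
            · rw [← dotProduct_mulVec]
              exact hA.posSemidef.dotProduct_mulVec_nonneg _
            · rw [← dotProduct_mulVec]
              exact hεpos.dotProduct_mulVec_pos hy
      have hCBt := (hub Bt hBtH hpos).dotProduct_mulVec_nonneg x
      have heq : C - Bt = C - (B - Xᴴ * A⁻¹ * X) + (ε:ℂ) • 1 := by rw [hBtdef]; abel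
      rw [heq] at hCBt
      calc (0:ℂ) ≤ star x ⬝ᵥ ((C - (B - Xᴴ * A⁻¹ * X) + (ε:ℂ) • 1) *ᵥ x) := hCBt
        _ = star x ⬝ᵥ ((C - (B - Xᴴ * A⁻¹ * X)) *ᵥ x) + (ε:ℂ) * (star x ⬝ᵥ x) := by
            simp [add_mulVec, smul_mulVec, dotProduct_add, dotProduct_smul, smul_eq_mul]
    -- now take ε → 0
    set a : ℂ := star x ⬝ᵥ ((C - (B - Xᴴ * A⁻¹ * X)) *ᵥ x) with ha
    set c : ℂ := star x ⬝ᵥ x with hc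
    have hcnn : (0:ℂ) ≤ c := dotProduct_star_self_nonneg x
    have hcre : 0 ≤ c.re ∧ c.im = 0 := by
      rw [Complex.le_def] at hcnn
      exact ⟨by simpa using hcnn.1, by simpa using hcnn.2.symm⟩
    have him : a.im = 0 := by
      have h1 := key 1 one_pos
      rw [Complex.le_def] at h1
      have := h1.2
      simp [Complex.add_im, Complex.mul_im, hcre.2] at this
      linarith [this]
    have hre : 0 ≤ a.re := by
      have hkey : ∀ ε : ℝ, 0 < ε → 0 ≤ a.re + ε * c.re := by
        intro ε hε
        have := (key ε hε)
        rw [Complex.le_def] at this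
        have h := this.1
        simpa [Complex.add_re, Complex.mul_re, hcre.2] using h
      by_contra hneg
      push_neg at hneg
      rcases hcre.1.lt_or_eq with hcpos | hczero
      · have := hkey (-a.re / (2 * c.re)) (div_pos (by linarith) (by linarith))
        have h2 : -a.re / (2 * c.re) * c.re = -a.re / 2 := by field_simp
        rw [h2] at this
        linarith
      · have := hkey 1 one_pos
        rw [← hczero] at this
        linarith
    rw [Complex.le_def]
    exact ⟨by simpa using hre, by simp [him]⟩
end

section
/- The Schur complement is monotone: if H₁ ≥ H₂ are Hermitian block matrices (with blocks indexed the same way) whose top-left blocks A₁, A₂ are positive definite, then H₁/A₁ ≥ H₂/A₂. -/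
open Matrix
open scoped ComplexOrder

/-- Monotonicity of the Schur complement: if `H₁ ≥ H₂` (Hermitian block matrices with positive
definite top-left blocks `A₁, A₂`), then `H₁/A₁ ≥ H₂/A₂`. -/
theorem schur_complement_monotone (m n : ℕ)
    (A₁ A₂ : Matrix (Fin m) (Fin m) ℂ) (B₁ B₂ : Matrix (Fin n) (Fin n) ℂ)
    (X₁ X₂ : Matrix (Fin m) (Fin n) ℂ)
    (hA₁ : A₁.PosDef) (hA₂ : A₂.PosDef)
    (hH₁ : (Matrix.fromBlocks A₁ X₁ X₁ᴴ B₁).IsHermitian)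
    (hH₂ : (Matrix.fromBlocks A₂ X₂ X₂ᴴ B₂).IsHermitian)
    (hle : (Matrix.fromBlocks A₁ X₁ X₁ᴴ B₁ - Matrix.fromBlocks A₂ X₂ X₂ᴴ B₂).PosSemidef) :
    ((B₁ - X₁ᴴ * A₁⁻¹ * X₁) - (B₂ - X₂ᴴ * A₂⁻¹ * X₂)).PosSemidef := by
  haveI : Invertible A₁ := hA₁.isUnit.invertible
  haveI : Invertible A₂ := hA₂.isUnit.invertible
  have hS₁ : (B₁ - X₁ᴴ * A₁⁻¹ * X₁).IsHermitian :=
    (Matrix.IsHermitian.fromBlocks₁₁ _ _ hA₁.1).mp hH₁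
  have hS₂ : (B₂ - X₂ᴴ * A₂⁻¹ * X₂).IsHermitian :=
    (Matrix.IsHermitian.fromBlocks₁₁ _ _ hA₂.1).mp hH₂
  refine PosSemidef.of_dotProduct_mulVec_nonneg (hS₁.sub hS₂) fun y => ?_
  set x : Fin m → ℂ := -((A₁⁻¹ * X₁) *ᵥ y) with hx
  have e₁ := Matrix.schur_complement_eq₁₁ X₁ B₁ x y hA₁.1
  have e₂ := Matrix.schur_complement_eq₁₁ X₂ B₂ x y hA₂.1
  have hx0 : x + (A₁⁻¹ * X₁) *ᵥ y = 0 := by rw [hx]; exact neg_add_cancel _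
  rw [hx0] at e₁
  simp only [star_zero, Matrix.zero_vecMul, zero_dotProduct, zero_add] at e₁
  -- nonnegativity of the A₂ quadratic term
  have hq : 0 ≤ (star (x + (A₂⁻¹ * X₂) *ᵥ y)) ᵥ* A₂ ⬝ᵥ (x + (A₂⁻¹ * X₂) *ᵥ y) := by
    rw [← Matrix.dotProduct_mulVec]
    exact hA₂.posSemidef.dotProduct_mulVec_nonneg _
  have hd := hle.dotProduct_mulVec_nonneg ((x ⊕ᵥ y))
  rw [Matrix.sub_mulVec, dotProduct_sub, Matrix.dotProduct_mulVec,
    Matrix.dotProduct_mulVec] at hd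
  rw [Matrix.dotProduct_mulVec, Matrix.vecMul_sub, sub_dotProduct]
  have e₂' : star y ᵥ* (B₂ - X₂ᴴ * A₂⁻¹ * X₂) ⬝ᵥ y =
      star (x ⊕ᵥ y) ᵥ* fromBlocks A₂ X₂ X₂ᴴ B₂ ⬝ᵥ (x ⊕ᵥ y)
        - star (x + (A₂⁻¹ * X₂) *ᵥ y) ᵥ* A₂ ⬝ᵥ (x + (A₂⁻¹ * X₂) *ᵥ y) := by
    rw [e₂]; ring
  rw [← e₁, e₂']
  have h := add_nonneg hd hq
  convert h using 1
  ring
end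

section
/- The harmonic mean of positive definite matrices is jointly concave: for positive definite A₁, A₂, B₁, B₂ and t ∈ [0,1], (tA₁ + (1−t)A₂) ! (tB₁ + (1−t)B₂) ≥ t(A₁!B₁) + (1−t)(A₂!B₂) in the Löwner order. -/
open Matrix
open scoped ComplexOrder

/-- The harmonic mean `A ! B = 2 (A⁻¹ + B⁻¹)⁻¹`. -/
noncomputable def harmMean {n : ℕ} (A B : Matrix (Fin n) (Fin n) ℂ) :
    Matrix (Fin n) (Fin n) ℂ :=
  (2 : ℂ) • (A⁻¹ + B⁻¹)⁻¹

section Aux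

variable {n : ℕ}

lemma psd_smul {M : Matrix (Fin n) (Fin n) ℂ} (hM : M.PosSemidef)
    {c : ℂ} (hc : 0 ≤ c) : (c • M).PosSemidef := by
  constructor
  · unfold Matrix.IsHermitian
    rw [conjTranspose_smul, hM.1.eq]
    congr 1
    exact Complex.conj_eq_iff_im.mpr (Complex.le_def.mp hc).2.symm
  · intro x
    convert mul_nonneg hc (hM.2 x) using 1
    simp only [Finsupp.mul_sum]
    exact Finsupp.sum_congr fun i _ => Finsupp.sum_congr fun j _ => by
      rw [Matrix.smul_apply, smul_eq_mul]; ring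

lemma pd_smul {M : Matrix (Fin n) (Fin n) ℂ} (hM : M.PosDef)
    {c : ℂ} (hc : 0 < c) : (c • M).PosDef := by
  constructor
  · unfold Matrix.IsHermitian
    rw [conjTranspose_smul, hM.1.eq]
    congr 1
    exact Complex.conj_eq_iff_im.mpr (Complex.le_def.mp hc.le).2.symm
  · intro x hx
    convert mul_pos hc (hM.2 hx) using 1
    simp only [Finsupp.mul_sum]
    exact Finsupp.sum_congr fun i _ => Finsupp.sum_congr fun j _ => by
      rw [Matrix.smul_apply, smul_eq_mul]; ring

lemma comb_posDef {M N : Matrix (Fin n) (Fin n) ℂ} (hM : M.PosDef) (hN : N.PosDef)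
    {t : ℝ} (ht0 : 0 ≤ t) (ht1 : t ≤ 1) :
    ((t : ℂ) • M + ((1 - t : ℝ) : ℂ) • N).PosDef := by
  rcases ht0.eq_or_lt with h | h
  · simp only [← h]
    simpa using hN
  · exact (pd_smul hM (by exact_mod_cast h)).add_posSemidef
      (psd_smul hN.posSemidef (by exact_mod_cast sub_nonneg.mpr ht1))

/-- `2 (A⁻¹ + B⁻¹)⁻¹ = 2 (B - B (A+B)⁻¹ B)`. -/
lemma harm_eq {A B : Matrix (Fin n) (Fin n) ℂ} (hA : A.PosDef) (hB : B.PosDef) :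
    harmMean A B = (2:ℂ) • (B - B * (A+B)⁻¹ * B) := by
  have hS : (A+B).PosDef := hA.add hB
  have hSd : IsUnit (A+B).det := (isUnit_iff_isUnit_det _).mp hS.isUnit
  have hAd : IsUnit A.det := (isUnit_iff_isUnit_det _).mp hA.isUnit
  have hBd : IsUnit B.det := (isUnit_iff_isUnit_det _).mp hB.isUnit
  have h1 : A⁻¹ + B⁻¹ = A⁻¹ * (A + B) * B⁻¹ :=
    inv_add_inv (by simp [hA.isUnit, hB.isUnit])
  have h2 : (A⁻¹ + B⁻¹)⁻¹ = B * (A+B)⁻¹ * A := by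
    rw [h1, Matrix.mul_inv_rev, Matrix.mul_inv_rev, nonsing_inv_nonsing_inv _ hAd,
      nonsing_inv_nonsing_inv _ hBd, Matrix.mul_assoc]
  have h3 : B - B * (A+B)⁻¹ * B = B * (A+B)⁻¹ * A := by
    have e : B * (A+B)⁻¹ * (A+B) = B := by
      rw [Matrix.mul_assoc, nonsing_inv_mul _ hSd, Matrix.mul_one]
    calc B - B * (A+B)⁻¹ * B = B * (A+B)⁻¹ * (A+B) - B * (A+B)⁻¹ * B := by rw [e]
      _ = B * (A+B)⁻¹ * A := by rw [← Matrix.mul_sub]; simp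
  rw [harmMean, h2, h3]

/-- Completing the square: the variational defect of the harmonic mean. -/
lemma core {A B : Matrix (Fin n) (Fin n) ℂ} (hA : A.PosDef) (hB : B.PosDef)
    (C : Matrix (Fin n) (Fin n) ℂ) :
    (2:ℂ) • (Cᴴ * A * C + (1 - C)ᴴ * B * (1 - C)) - harmMean A B
      = (2:ℂ) • ((C - (A+B)⁻¹ * B)ᴴ * (A+B) * (C - (A+B)⁻¹ * B)) := by
  have hS : (A+B).PosDef := hA.add hB
  have hSd : IsUnit (A+B).det := (isUnit_iff_isUnit_det _).mp hS.isUnit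
  have hSS : (A+B) * (A+B)⁻¹ = 1 := mul_nonsing_inv _ hSd
  have hS'S : (A+B)⁻¹ * (A+B) = 1 := nonsing_inv_mul _ hSd
  have hSinvH : ((A+B)⁻¹)ᴴ = (A+B)⁻¹ := (hS.isHermitian.inv).eq
  rw [harm_eq hA hB, ← smul_sub]
  congr 1
  have expand : (C - (A+B)⁻¹ * B)ᴴ * (A+B) * (C - (A+B)⁻¹ * B)
      = Cᴴ * (A+B) * C - Cᴴ * ((A+B) * (A+B)⁻¹) * B
        - B * ((A+B)⁻¹ * (A+B)) * C + B * ((A+B)⁻¹ * ((A+B) * (A+B)⁻¹)) * B := by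
    rw [conjTranspose_sub, conjTranspose_mul, hSinvH, hB.isHermitian.eq]
    noncomm_ring
  rw [expand, hSS, hS'S]
  simp only [Matrix.mul_one, Matrix.one_mul]
  rw [conjTranspose_sub, conjTranspose_one]
  noncomm_ring

lemma core_psd {A B : Matrix (Fin n) (Fin n) ℂ} (hA : A.PosDef) (hB : B.PosDef)
    (C : Matrix (Fin n) (Fin n) ℂ) :
    ((2:ℂ) • (Cᴴ * A * C + (1 - C)ᴴ * B * (1 - C)) - harmMean A B).PosSemidef := by
  rw [core hA hB C]
  exact psd_smul ((hA.add hB).posSemidef.conjTranspose_mul_mul_same _)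
    (by simp [Complex.le_def])

lemma core_eq {A B : Matrix (Fin n) (Fin n) ℂ} (hA : A.PosDef) (hB : B.PosDef) :
    harmMean A B = (2:ℂ) • ((((A+B)⁻¹*B)ᴴ) * A * ((A+B)⁻¹*B)
      + (1 - (A+B)⁻¹*B)ᴴ * B * (1 - (A+B)⁻¹*B)) := by
  have := core hA hB ((A+B)⁻¹*B)
  rw [sub_self] at this
  simp only [conjTranspose_zero, Matrix.zero_mul, Matrix.mul_zero, smul_zero] at this
  exact (sub_eq_zero.mp this).symm

end Aux

/-- The harmonic mean of positive definite matrices is jointly concave. -/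
theorem harmonic_mean_jointly_concave (n : ℕ)
    (A₁ A₂ B₁ B₂ : Matrix (Fin n) (Fin n) ℂ)
    (hA₁ : A₁.PosDef) (hA₂ : A₂.PosDef) (hB₁ : B₁.PosDef) (hB₂ : B₂.PosDef)
    (t : ℝ) (ht0 : 0 ≤ t) (ht1 : t ≤ 1) :
    (harmMean ((t : ℂ) • A₁ + ((1 - t : ℝ) : ℂ) • A₂)
        ((t : ℂ) • B₁ + ((1 - t : ℝ) : ℂ) • B₂)
      - ((t : ℂ) • harmMean A₁ B₁ + ((1 - t : ℝ) : ℂ) • harmMean A₂ B₂)).PosSemidef := by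
  set Ab : Matrix (Fin n) (Fin n) ℂ := (t : ℂ) • A₁ + ((1 - t : ℝ) : ℂ) • A₂ with hAb
  set Bb : Matrix (Fin n) (Fin n) ℂ := (t : ℂ) • B₁ + ((1 - t : ℝ) : ℂ) • B₂ with hBb
  have hAbp : Ab.PosDef := comb_posDef hA₁ hA₂ ht0 ht1
  have hBbp : Bb.PosDef := comb_posDef hB₁ hB₂ ht0 ht1
  set C : Matrix (Fin n) (Fin n) ℂ := (Ab + Bb)⁻¹ * Bb with hC
  have h0 : harmMean Ab Bb
      = (2:ℂ) • (Cᴴ * Ab * C + (1 - C)ᴴ * Bb * (1 - C)) := core_eq hAbp hBbp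
  have key : harmMean Ab Bb
        - ((t : ℂ) • harmMean A₁ B₁ + ((1 - t : ℝ) : ℂ) • harmMean A₂ B₂)
      = (t : ℂ) • ((2:ℂ) • (Cᴴ * A₁ * C + (1 - C)ᴴ * B₁ * (1 - C)) - harmMean A₁ B₁)
        + ((1 - t : ℝ) : ℂ) •
          ((2:ℂ) • (Cᴴ * A₂ * C + (1 - C)ᴴ * B₂ * (1 - C)) - harmMean A₂ B₂) := by
    rw [h0, hAb, hBb]
    simp only [Matrix.mul_add, Matrix.add_mul, Matrix.mul_smul, Matrix.smul_mul,
      smul_add, smul_sub, smul_smul]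
    module
  rw [key]
  have ht0' : (0:ℂ) ≤ (t:ℂ) := by exact_mod_cast ht0
  have ht1' : (0:ℂ) ≤ ((1 - t : ℝ) : ℂ) := by exact_mod_cast sub_nonneg.mpr ht1
  exact (psd_smul (core_psd hA₁ hB₁ C) ht0').add (psd_smul (core_psd hA₂ hB₂ C) ht1')
end

section
/- For positive definite matrices A, B, the geometric mean A#B := A^{1/2}(A^{-1/2} B A^{-1/2})^{1/2} A^{1/2} satisfies A ≥ (A#B) B⁻¹ (A#B), and moreover A#B is the maximum, in the Löwner order, among Hermitian X satisfying A ≥ X B⁻¹ X. -/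
open Matrix
open scoped ComplexOrder

/-- Total matrix square root: the PSD square root on PSD matrices, `0` elsewhere. -/
noncomputable def msqrt {𝕜 : Type*} [RCLike 𝕜] {n : Type*} [Fintype n] [DecidableEq n]
    (A : Matrix n n 𝕜) : Matrix n n 𝕜 :=
  letI := Classical.dec A.PosSemidef
  if h : A.PosSemidef then
    h.1.eigenvectorUnitary.1 * diagonal ((↑) ∘ (√·) ∘ h.1.eigenvalues) *
      (star h.1.eigenvectorUnitary : Matrix n n 𝕜) else 0

/-- The matrix geometric mean `A # B = A^{1/2} (A^{-1/2} B A^{-1/2})^{1/2} A^{1/2}`. -/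
noncomputable def geomMean {𝕜 : Type*} [RCLike 𝕜] {n : Type*} [Fintype n] [DecidableEq n]
    (A B : Matrix n n 𝕜) : Matrix n n 𝕜 :=
  msqrt A * msqrt ((msqrt A)⁻¹ * B * (msqrt A)⁻¹) * msqrt A

section Aux
variable {n : Type*} [Fintype n] [DecidableEq n]

lemma msqrt_eq {A : Matrix n n ℂ} (hA : A.PosSemidef) : msqrt A =
    hA.1.eigenvectorUnitary.1 * diagonal (RCLike.ofReal ∘ (√·) ∘ hA.1.eigenvalues) *
      (star hA.1.eigenvectorUnitary : Matrix n n ℂ) := by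
  simp only [msqrt]
  exact dif_pos hA

lemma msqrt_posSemidef {A : Matrix n n ℂ} (hA : A.PosSemidef) : (msqrt A).PosSemidef := by
  rw [msqrt_eq hA]
  have hD : (diagonal (RCLike.ofReal ∘ (√·) ∘ hA.1.eigenvalues) : Matrix n n ℂ).PosSemidef :=
    PosSemidef.diagonal (fun i => by
      simp only [Function.comp_apply, Pi.zero_apply]
      exact RCLike.ofReal_nonneg.2 (Real.sqrt_nonneg _))
  have := hD.mul_mul_conjTranspose_same (hA.1.eigenvectorUnitary : Matrix n n ℂ)
  rwa [star_eq_conjTranspose]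

lemma msqrt_mul_self {A : Matrix n n ℂ} (hA : A.PosSemidef) : msqrt A * msqrt A = A := by
  rw [msqrt_eq hA]
  have hU : (star hA.1.eigenvectorUnitary : Matrix n n ℂ) * hA.1.eigenvectorUnitary = 1 :=
    Unitary.coe_star_mul_self _
  have hDD : (diagonal (RCLike.ofReal ∘ (√·) ∘ hA.1.eigenvalues) : Matrix n n ℂ) *
      diagonal (RCLike.ofReal ∘ (√·) ∘ hA.1.eigenvalues) =
      diagonal (RCLike.ofReal ∘ hA.1.eigenvalues) := by
    rw [diagonal_mul_diagonal]
    congr 1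
    funext i
    simp only [Function.comp_apply]
    rw [← RCLike.ofReal_mul, Real.mul_self_sqrt (hA.eigenvalues_nonneg i)]
  conv_rhs => rw [hA.1.spectral_theorem]
  rw [Unitary.conjStarAlgAut_apply]
  calc _ = (hA.1.eigenvectorUnitary.1 * ((diagonal (RCLike.ofReal ∘ (√·) ∘ hA.1.eigenvalues) *
        ((star hA.1.eigenvectorUnitary : Matrix n n ℂ) * hA.1.eigenvectorUnitary.1)) *
        diagonal (RCLike.ofReal ∘ (√·) ∘ hA.1.eigenvalues)) *
        (star hA.1.eigenvectorUnitary : Matrix n n ℂ)) := by simp only [Matrix.mul_assoc]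
    _ = _ := by rw [hU, Matrix.mul_one, hDD]

lemma posDef_of_sq {S A : Matrix n n ℂ} (hS : S.PosSemidef) (h : S * S = A)
    (hA : A.PosDef) : S.PosDef := by
  refine PosDef.of_dotProduct_mulVec_pos hS.1 fun x hx =>
    lt_of_le_of_ne (hS.dotProduct_mulVec_nonneg x) fun hc => ?_
  have h0 : S *ᵥ x = 0 := (hS.dotProduct_mulVec_zero_iff x).mp hc.symm
  have : A *ᵥ x = 0 := by rw [← h, ← Matrix.mulVec_mulVec, h0, Matrix.mulVec_zero]
  have h2 := hA.dotProduct_mulVec_pos hx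
  rw [this, dotProduct_zero] at h2
  exact lt_irrefl _ h2

lemma msqrt_posDef {A : Matrix n n ℂ} (hA : A.PosDef) : (msqrt A).PosDef :=
  posDef_of_sq (msqrt_posSemidef hA.posSemidef) (msqrt_mul_self hA.posSemidef) hA

lemma posDef_conj {M : Matrix n n ℂ} (hM : M.PosDef) {C : Matrix n n ℂ} (hC : IsUnit C.det) :
    (Cᴴ * M * C).PosDef := by
  refine PosDef.of_dotProduct_mulVec_pos (Matrix.isHermitian_conjTranspose_mul_mul _ hM.1)
    fun x hx => ?_
  have hinj : Function.Injective C.mulVec := Matrix.mulVec_injective_iff_isUnit.2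
    ((Matrix.isUnit_iff_isUnit_det C).2 hC)
  have h1 : C *ᵥ x ≠ 0 := fun h => hx (hinj (by simpa using h))
  simpa only [star_mulVec, dotProduct_mulVec, vecMul_vecMul] using hM.dotProduct_mulVec_pos h1

lemma key_le {T Y R : Matrix n n ℂ} (hT : T.PosDef) (hY : Y.IsHermitian)
    (hR : R.PosDef) (hRR : R * R = T)
    (h : (1 - Y * (T * T)⁻¹ * Y).PosSemidef) : (T - Y).PosSemidef := by
  have hRdet : IsUnit R.det := isUnit_iff_ne_zero.2 hR.det_pos.ne'
  have hRinv1 : R * R⁻¹ = 1 := Matrix.mul_nonsing_inv _ hRdet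
  have hRinv2 : R⁻¹ * R = 1 := Matrix.nonsing_inv_mul _ hRdet
  have hRH : Rᴴ = R := hR.isHermitian
  have hRiH : (R⁻¹)ᴴ = R⁻¹ := hR.isHermitian.inv
  have hTiH : (T⁻¹)ᴴ = T⁻¹ := hT.isHermitian.inv
  have cancel1 : ∀ X : Matrix n n ℂ, R * (R⁻¹ * X) = X := fun X => by
    rw [← Matrix.mul_assoc, hRinv1, Matrix.one_mul]
  have cancel2 : ∀ X : Matrix n n ℂ, R⁻¹ * (R * X) = X := fun X => by
    rw [← Matrix.mul_assoc, hRinv2, Matrix.one_mul]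
  set Z := R⁻¹ * Y * R⁻¹ with hZ
  have hZH : Z.IsHermitian := by
    simp only [Matrix.IsHermitian, hZ, conjTranspose_mul, hRiH, hY.eq, Matrix.mul_assoc]
  set W := T⁻¹ * Y with hW
  have hTinv : T⁻¹ = R⁻¹ * R⁻¹ := by rw [← hRR, Matrix.mul_inv_rev]
  have hWW : Wᴴ * W = Y * (T * T)⁻¹ * Y := by
    simp only [hW, conjTranspose_mul, hTiH, hY.eq, Matrix.mul_inv_rev, Matrix.mul_assoc]
  have h' : (1 - Wᴴ * W).PosSemidef := by rwa [hWW]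
  have h1Z : (1 - Z).IsHermitian := Matrix.isHermitian_one.sub hZH
  have hpsd : (1 - Z).PosSemidef := by
    rw [h1Z.posSemidef_iff_eigenvalues_nonneg, Pi.le_def]; simp only [Pi.zero_apply]
    intro i
    set μ : ℝ := h1Z.eigenvalues i with hμ
    set v : n → ℂ := ⇑(h1Z.eigenvectorBasis i) with hvdef
    have hv : (1 - Z) *ᵥ v = μ • v := h1Z.mulVec_eigenvectorBasis i
    have hv0 : v ≠ 0 := by
      have h1 : ‖h1Z.eigenvectorBasis i‖ = 1 := h1Z.eigenvectorBasis.orthonormal.1 i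
      intro hc
      have : h1Z.eigenvectorBasis i = 0 := by ext j; exact congrFun hc j
      rw [this] at h1; simp at h1
    set lam : ℝ := 1 - μ with hlam
    have hZv : Z *ᵥ v = lam • v := by
      have : v - Z *ᵥ v = μ • v := by
        rw [← hv, Matrix.sub_mulVec, Matrix.one_mulVec]
      have h2 : Z *ᵥ v = v - μ • v := by
        rw [← this]; abel
      rw [h2, hlam, sub_smul, one_smul]
    set u : n → ℂ := R⁻¹ *ᵥ v with hu
    have hu0 : u ≠ 0 := by
      intro hc
      apply hv0
      have : v = R *ᵥ u := by
        rw [hu, Matrix.mulVec_mulVec, hRinv1, Matrix.one_mulVec]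
      rw [this, hc, Matrix.mulVec_zero]
    have hWu : W *ᵥ u = lam • u := by
      rw [hu, Matrix.mulVec_mulVec, hW, hTinv]
      have : R⁻¹ * R⁻¹ * Y * R⁻¹ = R⁻¹ * Z := by
        simp only [hZ, Matrix.mul_assoc]
      rw [this, ← Matrix.mulVec_mulVec, hZv, Matrix.mulVec_smul]
    have hkey := h'.dotProduct_mulVec_nonneg u
    set c : ℂ := star u ⬝ᵥ u with hc
    have hcpos : 0 < c := by
      rcases (dotProduct_star_self_nonneg u).lt_or_eq with h1 | h1
      · exact h1
      · exact absurd (dotProduct_star_self_eq_zero.1 h1.symm) hu0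
    have hexp : star u ⬝ᵥ ((1 - Wᴴ * W) *ᵥ u) = c - (lam^2 : ℝ) • c := by
      rw [Matrix.sub_mulVec, Matrix.one_mulVec, dotProduct_sub]
      congr 1
      rw [← Matrix.mulVec_mulVec, Matrix.dotProduct_mulVec, ← Matrix.star_mulVec, hWu]
      rw [star_smul, star_trivial, smul_dotProduct, dotProduct_smul]
      rw [smul_smul, ← hc]
      norm_num [pow_two]
    rw [hexp] at hkey
    have hre : 0 ≤ (1 - lam^2) * c.re := by
      have h2 := hkey
      rw [Complex.le_def] at h2
      have := h2.1
      simp only [Complex.sub_re, Complex.real_smul, Complex.mul_re, Complex.ofReal_re,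
        Complex.ofReal_im, Complex.zero_re, zero_mul, sub_zero] at this
      nlinarith [this]
    have hcre : 0 < c.re := by
      rw [Complex.lt_def] at hcpos
      simpa using hcpos.1
    have hlam2 : lam ^ 2 ≤ 1 := by nlinarith
    rw [hμ] at *
    nlinarith [hlam2]
  have hfin : R * (1 - Z) * R = T - Y := by
    rw [Matrix.mul_sub, Matrix.sub_mul, Matrix.mul_one, hRR]
    congr 1
    simp only [hZ, Matrix.mul_assoc, cancel1, cancel2]
    rw [hRinv2, Matrix.mul_one]
  have := hpsd.mul_mul_conjTranspose_same R
  rwa [hRH, hfin] at this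

end Aux

set_option maxHeartbeats 1000000 in
/-- The geometric mean `G = A # B` of positive definite matrices is the maximum, in the Löwner
order, among Hermitian `X` with `A ≥ X B⁻¹ X`; in particular `A ≥ G B⁻¹ G`. -/
theorem geomMean_maximal (n : ℕ) (A B : Matrix (Fin n) (Fin n) ℂ)
    (hA : A.PosDef) (hB : B.PosDef) :
    (geomMean A B).IsHermitian ∧ (geomMean A B).PosDef ∧
      (A - geomMean A B * B⁻¹ * geomMean A B).PosSemidef ∧
      (∀ X : Matrix (Fin n) (Fin n) ℂ, X.IsHermitian →
        (A - X * B⁻¹ * X).PosSemidef → (geomMean A B - X).PosSemidef) := by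
  set S := msqrt A with hSdef
  have hS : S.PosDef := msqrt_posDef hA
  have hSS : S * S = A := msqrt_mul_self hA.posSemidef
  have hSdet : IsUnit S.det := isUnit_iff_ne_zero.2 hS.det_pos.ne'
  have hSinv1 : S * S⁻¹ = 1 := Matrix.mul_nonsing_inv _ hSdet
  have hSinv2 : S⁻¹ * S = 1 := Matrix.nonsing_inv_mul _ hSdet
  have hSH : Sᴴ = S := hS.isHermitian
  have hSiH : (S⁻¹)ᴴ = S⁻¹ := hS.isHermitian.inv
  have cancelS1 : ∀ X : Matrix (Fin n) (Fin n) ℂ, S * (S⁻¹ * X) = X := fun X => by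
    rw [← Matrix.mul_assoc, hSinv1, Matrix.one_mul]
  have cancelS2 : ∀ X : Matrix (Fin n) (Fin n) ℂ, S⁻¹ * (S * X) = X := fun X => by
    rw [← Matrix.mul_assoc, hSinv2, Matrix.one_mul]
  set M := S⁻¹ * B * S⁻¹ with hMdef
  have hM : M.PosDef := by
    have hd : IsUnit (S⁻¹).det := isUnit_iff_ne_zero.2 hS.inv.det_pos.ne'
    have := posDef_conj hB hd
    rwa [hSiH] at this
  set T := msqrt M with hTdef
  have hT : T.PosDef := msqrt_posDef hM
  have hTT : T * T = M := msqrt_mul_self hM.posSemidef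
  have hTdet : IsUnit T.det := isUnit_iff_ne_zero.2 hT.det_pos.ne'
  have hTinv1 : T * T⁻¹ = 1 := Matrix.mul_nonsing_inv _ hTdet
  have hTinv2 : T⁻¹ * T = 1 := Matrix.nonsing_inv_mul _ hTdet
  have cancelT1 : ∀ X : Matrix (Fin n) (Fin n) ℂ, T * (T⁻¹ * X) = X := fun X => by
    rw [← Matrix.mul_assoc, hTinv1, Matrix.one_mul]
  have cancelT2 : ∀ X : Matrix (Fin n) (Fin n) ℂ, T⁻¹ * (T * X) = X := fun X => by
    rw [← Matrix.mul_assoc, hTinv2, Matrix.one_mul]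
  have hG : geomMean A B = S * T * S := by
    rw [geomMean, ← hSdef, ← hMdef, ← hTdef]
  have hGH : (geomMean A B).IsHermitian := by
    rw [hG]
    show (S * T * S)ᴴ = S * T * S
    simp only [conjTranspose_mul, hSH, hT.isHermitian.eq, Matrix.mul_assoc]
  have hGP : (geomMean A B).PosDef := by
    rw [hG]
    have := posDef_conj hT hSdet
    rwa [hSH] at this
  have hB' : S * M * S = B := by
    rw [hMdef]
    simp only [Matrix.mul_assoc, cancelS1, cancelS2]
    rw [hSinv2, Matrix.mul_one]
  have hBinv : B⁻¹ = S⁻¹ * M⁻¹ * S⁻¹ := by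
    rw [← hB', Matrix.mul_inv_rev, Matrix.mul_inv_rev, Matrix.mul_assoc]
  have hMinv : M⁻¹ = T⁻¹ * T⁻¹ := by rw [← hTT, Matrix.mul_inv_rev]
  have hGBG : geomMean A B * B⁻¹ * geomMean A B = A := by
    rw [hG, hBinv, hMinv, ← hSS]
    simp only [Matrix.mul_assoc, cancelS1, cancelS2, cancelT1, cancelT2]
  refine ⟨hGH, hGP, ?_, ?_⟩
  · rw [hGBG, sub_self]
    exact Matrix.PosSemidef.zero
  · intro X hX hXle
    set Y := S⁻¹ * X * S⁻¹ with hYdef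
    have hYH : Y.IsHermitian := by
      show Yᴴ = Y
      simp only [hYdef, conjTranspose_mul, hSiH, hX.eq, Matrix.mul_assoc]
    have e1 : S⁻¹ * A * S⁻¹ = 1 := by
      rw [← hSS]
      simp only [Matrix.mul_assoc, cancelS2]
      rw [hSinv1]
    have e2 : S⁻¹ * (X * B⁻¹ * X) * S⁻¹ = Y * (T * T)⁻¹ * Y := by
      rw [hTT, hBinv, hYdef]
      simp only [Matrix.mul_assoc]
    have hiff : S⁻¹ * (A - X * B⁻¹ * X) * S⁻¹ = 1 - Y * (T * T)⁻¹ * Y := by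
      rw [Matrix.mul_sub, Matrix.sub_mul, e1, e2]
    have hpre : (1 - Y * (T * T)⁻¹ * Y).PosSemidef := by
      have := hXle.conjTranspose_mul_mul_same (S⁻¹)
      rwa [hSiH, hiff] at this
    have hTY : (T - Y).PosSemidef :=
      key_le hT hYH (msqrt_posDef hT) (msqrt_mul_self hT.posSemidef) hpre
    have e3 : S * Y * S = X := by
      rw [hYdef]
      simp only [Matrix.mul_assoc, cancelS1, cancelS2]
      rw [hSinv2, Matrix.mul_one]
    have hfin : S * (T - Y) * S = geomMean A B - X := by
      rw [Matrix.mul_sub, Matrix.sub_mul, e3, hG]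
    have := hTY.mul_mul_conjTranspose_same S
    rwa [hSH, hfin] at this
end

section
/- Let M, N be 2×2 complex Hermitian matrices. There exists a real symmetric 2×2 matrix R with M ≤ R ≤ N (Löwner order) if and only if M ≤ N and M ≤ N*, where N* is the entrywise complex conjugate of N. -/
open Matrix
open scoped ComplexOrder

lemma key_ineq (a d b c U V P Q : ℝ) (ha : 0 ≤ a) (hd : 0 ≤ d)
    (hP : 0 ≤ P) (hQ : 0 ≤ Q) (hUV : U^2 + V^2 = P*Q)
    (hbc : b^2 + c^2 ≤ a*d) : 0 ≤ a*P + d*Q + 2*(b*U - c*V) := by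
  have hX : 0 ≤ a*P + d*Q := add_nonneg (mul_nonneg ha hP) (mul_nonneg hd hQ)
  have h1 : (b*U - c*V)^2 ≤ (b^2+c^2)*(U^2+V^2) := by nlinarith [sq_nonneg (b*V + c*U)]
  have h2 : (b^2+c^2)*(U^2+V^2) ≤ a*d*(P*Q) := by
    rw [hUV]; exact mul_le_mul_of_nonneg_right hbc (mul_nonneg hP hQ)
  have h3 : 4*(a*d*(P*Q)) ≤ (a*P+d*Q)^2 := by nlinarith [sq_nonneg (a*P - d*Q)]
  have h4 : (2*(b*U-c*V))^2 ≤ (a*P+d*Q)^2 := by nlinarith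
  by_contra hcon
  push_neg at hcon
  have h5 : a*P + d*Q < -(2*(b*U-c*V)) := by linarith
  have h6 : (a*P+d*Q)^2 < (-(2*(b*U-c*V)))^2 := pow_lt_pow_left₀ h5 hX (by norm_num)
  nlinarith

lemma psd2 (A : Matrix (Fin 2) (Fin 2) ℂ) (hA : A.IsHermitian)
    (h0 : 0 ≤ (A 0 0).re) (h1 : 0 ≤ (A 1 1).re)
    (hdet : Complex.normSq (A 0 1) ≤ (A 0 0).re * (A 1 1).re) : A.PosSemidef := by
  have e00 : (A 0 0).im = 0 := by
    have := hA.apply 0 0; rw [Complex.star_def, Complex.conj_eq_iff_im] at this; exact this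
  have e11 : (A 1 1).im = 0 := by
    have := hA.apply 1 1; rw [Complex.star_def, Complex.conj_eq_iff_im] at this; exact this
  have e10 : A 1 0 = (starRingEnd ℂ) (A 0 1) := by
    have := (hA.apply 1 0).symm; rw [Complex.star_def] at this; exact this
  refine Matrix.posSemidef_iff_dotProduct_mulVec.2 ⟨hA, fun x => ?_⟩
  rw [Complex.le_def]
  set p := (x 0).re; set q := (x 0).im; set r := (x 1).re; set s := (x 1).im
  set a := (A 0 0).re; set d := (A 1 1).re; set b := (A 0 1).re; set c := (A 0 1).im
  have hbc : b^2 + c^2 ≤ a*d := by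
    have : Complex.normSq (A 0 1) = b^2 + c^2 := by simp [Complex.normSq_apply, sq, b, c]
    linarith [hdet, this.symm.le]
  have key := key_ineq a d b c (p*r+q*s) (p*s-q*r) (p^2+q^2) (r^2+s^2) h0 h1
    (by positivity) (by positivity) (by ring) hbc
  constructor
  · simp only [dotProduct, mulVec, Fin.sum_univ_two, Pi.star_apply, RCLike.star_def,
      Complex.add_re, Complex.mul_re, Complex.mul_im, Complex.conj_re, Complex.conj_im,
      Complex.add_im, e10, Complex.zero_re, e00, e11]
    nlinarith [key]
  · simp only [dotProduct, mulVec, Fin.sum_univ_two, Pi.star_apply, RCLike.star_def,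
      Complex.add_re, Complex.mul_re, Complex.mul_im, Complex.conj_re, Complex.conj_im,
      Complex.add_im, e10, Complex.zero_im, e00, e11]
    ring

lemma psd2' (A : Matrix (Fin 2) (Fin 2) ℂ) (h : A.PosSemidef) :
    0 ≤ (A 0 0).re ∧ 0 ≤ (A 1 1).re ∧
      Complex.normSq (A 0 1) ≤ (A 0 0).re * (A 1 1).re := by
  have e00 : (A 0 0).im = 0 := by
    have := h.1.apply 0 0; rw [Complex.star_def, Complex.conj_eq_iff_im] at this; exact this
  have e11 : (A 1 1).im = 0 := by
    have := h.1.apply 1 1; rw [Complex.star_def, Complex.conj_eq_iff_im] at this; exact this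
  have e10 : A 1 0 = (starRingEnd ℂ) (A 0 1) := by
    have := (h.1.apply 1 0).symm; rw [Complex.star_def] at this; exact this
  have h0 : 0 ≤ (A 0 0).re := by
    have := h.dotProduct_mulVec_nonneg ![1, 0]
    simp [dotProduct, mulVec, Fin.sum_univ_two, Complex.le_def] at this
    exact this.1
  have h1 : 0 ≤ (A 1 1).re := by
    have := h.dotProduct_mulVec_nonneg ![0, 1]
    simp [dotProduct, mulVec, Fin.sum_univ_two, Complex.le_def] at this
    exact this.1
  refine ⟨h0, h1, ?_⟩
  have hdet : 0 ≤ A.det.re := by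
    have hdet2 : A.det = ((h.1.eigenvalues 0 : ℝ) : ℂ) * ((h.1.eigenvalues 1 : ℝ) : ℂ) :=
      h.1.det_eq_prod_eigenvalues.trans (Fin.prod_univ_two _)
    rw [hdet2, ← Complex.ofReal_mul, Complex.ofReal_re]
    exact mul_nonneg (h.eigenvalues_nonneg 0) (h.eigenvalues_nonneg 1)
  rw [det_fin_two, e10] at hdet
  have : (A 0 1 * (starRingEnd ℂ) (A 0 1)) = (Complex.normSq (A 0 1) : ℂ) := by
    rw [mul_comm, Complex.normSq_eq_conj_mul_self]
  rw [this] at hdet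
  simp only [Complex.sub_re, Complex.mul_re, e00, e11, Complex.ofReal_re] at hdet
  linarith

lemma psd_add {A B : Matrix (Fin 2) (Fin 2) ℂ} (hA : A.PosSemidef) (hB : B.PosSemidef) :
    (A + B).PosSemidef :=
  Matrix.posSemidef_iff_dotProduct_mulVec.2 ⟨hA.1.add hB.1, fun x => by
    rw [Matrix.add_mulVec, dotProduct_add]; exact add_nonneg (hA.dotProduct_mulVec_nonneg x) (hB.dotProduct_mulVec_nonneg x)⟩

set_option maxHeartbeats 1600000 in
/-- For `2×2` Hermitian `M, N`, there is a real symmetric `R` with `M ≤ R ≤ N` in the Löwner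
order iff `M ≤ N` and `M ≤ N*` (entrywise complex conjugate). -/
theorem exists_real_between_iff (M N : Matrix (Fin 2) (Fin 2) ℂ)
    (hM : M.IsHermitian) (hN : N.IsHermitian) :
    (∃ R : Matrix (Fin 2) (Fin 2) ℂ,
        (∀ i j, (R i j).im = 0) ∧ R.IsSymm ∧
        (R - M).PosSemidef ∧ (N - R).PosSemidef) ↔
      (N - M).PosSemidef ∧ (N.map (starRingEnd ℂ) - M).PosSemidef := by
  constructor
  · rintro ⟨R, hre, hsymm, h1, h2⟩
    constructor
    · have : N - M = (N - R) + (R - M) := (sub_add_sub_cancel N R M).symm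
      rw [this]; exact psd_add h2 h1
    · have heq : N.map (starRingEnd ℂ) - M = (N - R)ᵀ + (R - M) := by
        ext i j
        have hNji : N j i = (starRingEnd ℂ) (N i j) := by
          have := (hN.apply j i).symm; rw [Complex.star_def] at this; exact this
        have hRji : R j i = R i j := by
          have := congrFun (congrFun hsymm i) j
          simpa [Matrix.transpose_apply] using this
        simp [Matrix.transpose_apply, Matrix.map_apply, Matrix.sub_apply, Matrix.add_apply,
          hNji, hRji]
      rw [heq]; exact psd_add h2.transpose h1
  · rintro ⟨hNM, hNcM⟩
    -- real data
    set m0 := (M 0 0).re with hm0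
    set m1 := (M 1 1).re with hm1
    set n0 := (N 0 0).re with hn0
    set n1 := (N 1 1).re with hn1
    set μ := M 0 1 with hμdef
    set ν := N 0 1 with hνdef
    have eM00 : (M 0 0).im = 0 := by
      have := hM.apply 0 0; rw [Complex.star_def, Complex.conj_eq_iff_im] at this; exact this
    have eM11 : (M 1 1).im = 0 := by
      have := hM.apply 1 1; rw [Complex.star_def, Complex.conj_eq_iff_im] at this; exact this
    have eN00 : (N 0 0).im = 0 := by
      have := hN.apply 0 0; rw [Complex.star_def, Complex.conj_eq_iff_im] at this; exact this
    have eN11 : (N 1 1).im = 0 := by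
      have := hN.apply 1 1; rw [Complex.star_def, Complex.conj_eq_iff_im] at this; exact this
    obtain ⟨hA0, hA1, hAdet⟩ := psd2' _ hNM
    obtain ⟨hB0, hB1, hBdet⟩ := psd2' _ hNcM
    -- translate
    have hd0 : 0 ≤ n0 - m0 := by
      simpa [Matrix.sub_apply, Complex.sub_re, hm0, hn0] using hA0
    have hd1 : 0 ≤ n1 - m1 := by
      simpa [Matrix.sub_apply, Complex.sub_re, hm1, hn1] using hA1
    set D := (n0 - m0) * (n1 - m1) with hD
    have hD1 : (ν.re - μ.re)^2 + (ν.im - μ.im)^2 ≤ D := by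
      have h1 : Complex.normSq ((N - M) 0 1) = (ν.re - μ.re)^2 + (ν.im - μ.im)^2 := by
        simp [Matrix.sub_apply, Complex.normSq_apply, Complex.sub_re, Complex.sub_im, sq, hμdef, hνdef]
      have h2 : ((N - M) 0 0).re = n0 - m0 := by simp [Matrix.sub_apply, Complex.sub_re, hn0, hm0]
      have h3 : ((N - M) 1 1).re = n1 - m1 := by simp [Matrix.sub_apply, Complex.sub_re, hn1, hm1]
      rw [h1, h2, h3] at hAdet; exact hAdet
    have hD2 : (ν.re - μ.re)^2 + (ν.im + μ.im)^2 ≤ D := by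
      have h1 : Complex.normSq ((N.map (starRingEnd ℂ) - M) 0 1)
          = (ν.re - μ.re)^2 + (ν.im + μ.im)^2 := by
        simp [Matrix.sub_apply, Matrix.map_apply, Complex.normSq_apply, Complex.sub_re,
          Complex.sub_im, sq]
        ring
      have h2 : ((N.map (starRingEnd ℂ) - M) 0 0).re = n0 - m0 := by
        simp [Matrix.sub_apply, Matrix.map_apply, Complex.sub_re, hn0, hm0]
      have h3 : ((N.map (starRingEnd ℂ) - M) 1 1).re = n1 - m1 := by
        simp [Matrix.sub_apply, Matrix.map_apply, Complex.sub_re, hn1, hm1]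
      rw [h1, h2, h3] at hBdet; exact hBdet
    set c := ν.re - μ.re with hc
    clear_value m0 m1 n0 n1 μ ν D c
    have hE : (|μ.im| + |ν.im|)^2 ≤ D - c^2 := by
      rcases abs_cases μ.im with ⟨ha, _⟩ | ⟨ha, _⟩ <;>
        rcases abs_cases ν.im with ⟨hb, _⟩ | ⟨hb, _⟩ <;>
        rw [ha, hb]
      · nlinarith [hD2]
      · nlinarith [hD1]
      · nlinarith [hD1]
      · nlinarith [hD2]
    set s := |μ.im| + |ν.im| with hs
    have hs0 : 0 ≤ s := add_nonneg (abs_nonneg _) (abs_nonneg _)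
    set t : ℝ := if s = 0 then 1/2 else |ν.im| / s with ht
    have ht0 : 0 ≤ t := by
      rw [ht]; split
      · norm_num
      · exact div_nonneg (abs_nonneg _) hs0
    have ht1 : t ≤ 1 := by
      rw [ht]; split
      · norm_num
      · rename_i hne
        rw [div_le_one (lt_of_le_of_ne hs0 (Ne.symm hne))]
        rw [hs]; linarith [abs_nonneg μ.im]
    have hts : t * s = |ν.im| := by
      rw [ht]; split
      · rename_i h0
        have : |ν.im| = 0 := by
          have := abs_nonneg μ.im; have := abs_nonneg ν.im; linarith [hs ▸ h0]
        simp [h0, this]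
      · rename_i hne
        field_simp
    have hts' : (1 - t) * s = |μ.im| := by
      have h' : (1 - t) * s = s - t * s := by ring
      rw [h', hts, hs]; ring
    have hEc : 0 ≤ D - c^2 := le_trans (sq_nonneg s) hE
    have hμb : μ.im^2 ≤ (1-t)^2 * (D - c^2) := by
      have h1 : (1-t)^2 * s^2 ≤ (1-t)^2 * (D - c^2) :=
        mul_le_mul_of_nonneg_left hE (sq_nonneg (1-t))
      have h2 : ((1-t)*s)^2 = (1-t)^2 * s^2 := by ring
      have h3 : ((1-t)*s)^2 = μ.im^2 := by rw [hts', sq_abs]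
      linarith
    have hνb : ν.im^2 ≤ t^2 * (D - c^2) := by
      have h1 : t^2 * s^2 ≤ t^2 * (D - c^2) :=
        mul_le_mul_of_nonneg_left hE (sq_nonneg t)
      have h2 : (t*s)^2 = t^2 * s^2 := by ring
      have h3 : (t*s)^2 = ν.im^2 := by rw [hts, sq_abs]
      linarith
    refine ⟨!![((t*m0+(1-t)*n0 : ℝ) : ℂ), ((t*μ.re+(1-t)*ν.re : ℝ) : ℂ);
      ((t*μ.re+(1-t)*ν.re : ℝ) : ℂ), ((t*m1+(1-t)*n1 : ℝ) : ℂ)], ?_, ?_, ?_, ?_⟩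
    · intro i j; fin_cases i <;> fin_cases j <;> simp
    · rw [Matrix.IsSymm]; ext i j; fin_cases i <;> fin_cases j <;> simp
    · have hherm : (!![((t*m0+(1-t)*n0 : ℝ) : ℂ), ((t*μ.re+(1-t)*ν.re : ℝ) : ℂ);
          ((t*μ.re+(1-t)*ν.re : ℝ) : ℂ), ((t*m1+(1-t)*n1 : ℝ) : ℂ)]
          - M).IsHermitian := by
        refine IsHermitian.sub ?_ hM
        rw [Matrix.IsHermitian]
        ext i j; fin_cases i <;> fin_cases j <;>
          simp [Matrix.conjTranspose_apply, Complex.conj_ofReal]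
      refine psd2 _ hherm ?_ ?_ ?_
      · simp only [Matrix.sub_apply, Complex.sub_re, Matrix.cons_val', Matrix.cons_val_zero,
          Matrix.empty_val', Matrix.cons_val_fin_one, Matrix.of_apply, Complex.ofReal_re]
        rw [← hm0]
        nlinarith [mul_nonneg (sub_nonneg.2 ht1) hd0]
      · simp only [Matrix.sub_apply, Complex.sub_re, Matrix.cons_val', Matrix.cons_val_zero,
          Matrix.cons_val_one, Matrix.head_cons, Matrix.head_fin_const, Matrix.empty_val',
          Matrix.cons_val_fin_one, Matrix.of_apply, Complex.ofReal_re]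
        rw [← hm1]
        nlinarith [mul_nonneg (sub_nonneg.2 ht1) hd1]
      · simp only [Matrix.sub_apply, Complex.normSq_apply, Complex.sub_re, Complex.sub_im,
          Matrix.cons_val', Matrix.cons_val_zero, Matrix.cons_val_one, Matrix.head_cons,
          Matrix.head_fin_const, Matrix.empty_val', Matrix.cons_val_fin_one, Matrix.of_apply,
          Complex.ofReal_re, Complex.ofReal_im]
        rw [← hm0, ← hm1, ← hμdef]
        have hμb' := hμb
        rw [hD, hc] at hμb'
        nlinarith [hμb']
    · have hherm : (N - !![((t*m0+(1-t)*n0 : ℝ) : ℂ), ((t*μ.re+(1-t)*ν.re : ℝ) : ℂ);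
          ((t*μ.re+(1-t)*ν.re : ℝ) : ℂ), ((t*m1+(1-t)*n1 : ℝ) : ℂ)]).IsHermitian := by
        refine IsHermitian.sub hN ?_
        rw [Matrix.IsHermitian]
        ext i j; fin_cases i <;> fin_cases j <;>
          simp [Matrix.conjTranspose_apply, Complex.conj_ofReal]
      refine psd2 _ hherm ?_ ?_ ?_
      · simp only [Matrix.sub_apply, Complex.sub_re, Matrix.cons_val', Matrix.cons_val_zero,
          Matrix.empty_val', Matrix.cons_val_fin_one, Matrix.of_apply, Complex.ofReal_re]
        rw [← hn0]
        nlinarith [mul_nonneg ht0 hd0]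
      · simp only [Matrix.sub_apply, Complex.sub_re, Matrix.cons_val', Matrix.cons_val_zero,
          Matrix.cons_val_one, Matrix.head_cons, Matrix.head_fin_const, Matrix.empty_val',
          Matrix.cons_val_fin_one, Matrix.of_apply, Complex.ofReal_re]
        rw [← hn1]
        nlinarith [mul_nonneg ht0 hd1]
      · simp only [Matrix.sub_apply, Complex.normSq_apply, Complex.sub_re, Complex.sub_im,
          Matrix.cons_val', Matrix.cons_val_zero, Matrix.cons_val_one, Matrix.head_cons,
          Matrix.head_fin_const, Matrix.empty_val', Matrix.cons_val_fin_one, Matrix.of_apply,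
          Complex.ofReal_re, Complex.ofReal_im]
        rw [← hn0, ← hn1, ← hνdef]
        have hνb' := hνb
        rw [hD, hc] at hνb'
        nlinarith [hνb']
end

section
/- Let k ∈ (0,1), let |x⟩ be a unit vector in ℂ^{d_A} ⊕ ℂ^{d_B} decomposed as |x⟩ = (√p |y⟩, √(1−p) |z⟩) with unit vectors |y⟩, |z⟩ and p ∈ [0,1]. Define V := k|x⟩⟨x| + (1/k)(I − |x⟩⟨x|), γ_A := k|y⟩⟨y| + (1/k)(I_A − |y⟩⟨y|), γ_B := k|z⟩⟨z| + (1/k)(I_B − |z⟩⟨z|). Then V − γ_A ⊕ γ_B is positive semidefinite; explicitly V − γ_A⊕γ_B = (1/k − k) w w† where w = (√(1−p) |y⟩, −√p |z⟩). -/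
open Matrix
open scoped ComplexOrder

/-- Key computation for absolute separability of Gaussian states: with
`V = k|x⟩⟨x| + (1/k)(I - |x⟩⟨x|)`, `γ_A = k|y⟩⟨y| + (1/k)(I_A - |y⟩⟨y|)`,
`γ_B = k|z⟩⟨z| + (1/k)(I_B - |z⟩⟨z|)` and `x = (√p y, √(1-p) z)`, one has
`V - γ_A ⊕ γ_B = (1/k - k) w w†` with `w = (√(1-p) y, -√p z)`, which is positive
semidefinite. -/
theorem absolutely_separable_key (dA dB : ℕ) (k p : ℝ)
    (hk0 : 0 < k) (hk1 : k < 1) (hp0 : 0 ≤ p) (hp1 : p ≤ 1)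
    (y : Fin dA → ℂ) (z : Fin dB → ℂ)
    (hy : ∑ i, Complex.normSq (y i) = 1) (hz : ∑ i, Complex.normSq (z i) = 1) :
    let x : Fin dA ⊕ Fin dB → ℂ :=
      Sum.elim (fun i => (Real.sqrt p : ℂ) * y i) (fun j => (Real.sqrt (1 - p) : ℂ) * z j)
    let w : Fin dA ⊕ Fin dB → ℂ :=
      Sum.elim (fun i => (Real.sqrt (1 - p) : ℂ) * y i) (fun j => -((Real.sqrt p : ℂ) * z j))
    let V : Matrix (Fin dA ⊕ Fin dB) (Fin dA ⊕ Fin dB) ℂ :=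
      (k : ℂ) • Matrix.vecMulVec x (star x) +
        ((k⁻¹ : ℝ) : ℂ) • (1 - Matrix.vecMulVec x (star x))
    let γA : Matrix (Fin dA) (Fin dA) ℂ :=
      (k : ℂ) • Matrix.vecMulVec y (star y) +
        ((k⁻¹ : ℝ) : ℂ) • (1 - Matrix.vecMulVec y (star y))
    let γB : Matrix (Fin dB) (Fin dB) ℂ :=
      (k : ℂ) • Matrix.vecMulVec z (star z) +
        ((k⁻¹ : ℝ) : ℂ) • (1 - Matrix.vecMulVec z (star z))
    V - Matrix.fromBlocks γA 0 0 γB =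
        ((k⁻¹ - k : ℝ) : ℂ) • Matrix.vecMulVec w (star w) ∧
      (V - Matrix.fromBlocks γA 0 0 γB).PosSemidef := by
  intro x w V γA γB
  have hsp : (Real.sqrt p : ℂ) * (Real.sqrt p : ℂ) = (p : ℂ) := by
    rw [← Complex.ofReal_mul, Real.mul_self_sqrt hp0]
  have hsq : (Real.sqrt (1 - p) : ℂ) * (Real.sqrt (1 - p) : ℂ) = 1 - (p : ℂ) := by
    rw [← Complex.ofReal_mul, Real.mul_self_sqrt (by linarith)]
    push_cast; ring
  have heq : V - Matrix.fromBlocks γA 0 0 γB =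
      ((k⁻¹ - k : ℝ) : ℂ) • Matrix.vecMulVec w (star w) := by
    ext i j
    rcases i with i | i <;> rcases j with j | j <;>
      simp only [V, γA, γB, x, w, Matrix.sub_apply, Matrix.add_apply, Matrix.smul_apply,
        Matrix.vecMulVec_apply, Matrix.fromBlocks_apply₁₁, Matrix.fromBlocks_apply₁₂,
        Matrix.fromBlocks_apply₂₁, Matrix.fromBlocks_apply₂₂, Matrix.one_apply,
        Matrix.zero_apply, Sum.elim_inl, Sum.elim_inr, Pi.star_apply, star_mul',
        Complex.star_def, Complex.conj_ofReal, smul_eq_mul, Sum.inl.injEq, Sum.inr.injEq,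
        map_neg, _root_.map_mul, mul_neg, neg_mul, neg_neg, reduceCtorEq, if_false, Complex.ofReal_sub, Complex.ofReal_inv,
        Complex.ofReal_one]
    · linear_combination ((k : ℂ) - (k : ℂ)⁻¹) * (y i * (starRingEnd ℂ) (y j)) * (hsp + hsq)
    · ring
    · ring
    · linear_combination ((k : ℂ) - (k : ℂ)⁻¹) * (z i * (starRingEnd ℂ) (z j)) * (hsp + hsq)
  refine ⟨heq, ?_⟩
  rw [heq]
  have hc : (0 : ℝ) ≤ k⁻¹ - k := by
    have h1 : (1 : ℝ) ≤ k⁻¹ := (one_le_inv_iff₀ ).2 ⟨hk0, hk1.le⟩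
    linarith
  set c := Real.sqrt (k⁻¹ - k) with hcdef
  have hcc : ((k⁻¹ - k : ℝ) : ℂ) = (c : ℂ) * (c : ℂ) := by
    rw [← Complex.ofReal_mul, Real.mul_self_sqrt hc]
  have huv : ((k⁻¹ - k : ℝ) : ℂ) • Matrix.vecMulVec w (star w) =
      Matrix.vecMulVec ((c : ℂ) • w) (star ((c : ℂ) • w)) := by
    ext i j
    simp only [Matrix.smul_apply, Matrix.vecMulVec_apply, Pi.star_apply, Pi.smul_apply,
      smul_eq_mul, Complex.star_def, _root_.map_mul, Complex.conj_ofReal, hcc]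
    ring
  rw [huv, Matrix.vecMulVec_eq (Fin 1), ← Matrix.conjTranspose_replicateCol]
  exact Matrix.posSemidef_self_mul_conjTranspose _
end

section
/- Let V be a real positive definite matrix of size 2(m+n) with block decomposition V = [[V_A, X],[Xᵀ, V_B]] (blocks of sizes 2m and 2n), and let Θ_B = I_A ⊕ (⊕ⁿ diag(1,−1)) be the partial-transpose matrix on subsystem B. If V is invariant under partial transposition, i.e., Θ_B V Θ_B = V (equivalently X Θ_B = X and Θ_B V_B Θ_B = V_B), and V_B − iΩ_B is invertible, then the matrix X(V_B − iΩ_B)⁻¹Xᵀ is real (equal to its entrywise complex conjugate X(V_B + iΩ_B)⁻¹Xᵀ). -/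
open Matrix
open scoped ComplexOrder Kronecker

/-- The single-mode symplectic form `ω`. -/
def omega1 : Matrix (Fin 2) (Fin 2) ℝ := !![0, 1; -1, 0]
/-- The single-mode partial transposition matrix `ζ = diag(1, -1)`. -/
def zeta1 : Matrix (Fin 2) (Fin 2) ℝ := !![1, 0; 0, -1]

/-- If a block `X`, `V_B` of a covariance matrix is invariant under partial transposition on
`B` (`X Θ_B = X`, `Θ_B V_B Θ_B = V_B`), and `V_B - iΩ_B` is invertible, then
`X (V_B - iΩ_B)⁻¹ Xᵀ = X (V_B + iΩ_B)⁻¹ Xᵀ`, so this matrix is real. -/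
theorem invariant_partial_transpose_real (m n : ℕ)
    (X : Matrix (Fin (2 * m)) (Fin n × Fin 2) ℝ)
    (VB : Matrix (Fin n × Fin 2) (Fin n × Fin 2) ℝ) (hVB : VB.IsSymm)
    (hX : X * ((1 : Matrix (Fin n) (Fin n) ℝ) ⊗ₖ zeta1) = X)
    (hV : ((1 : Matrix (Fin n) (Fin n) ℝ) ⊗ₖ zeta1) * VB *
        ((1 : Matrix (Fin n) (Fin n) ℝ) ⊗ₖ zeta1) = VB)
    (hinv : IsUnit (VB.map Complex.ofReal -
        Complex.I • ((1 : Matrix (Fin n) (Fin n) ℝ) ⊗ₖ omega1).map Complex.ofReal).det) :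
    X.map Complex.ofReal *
        (VB.map Complex.ofReal -
          Complex.I • ((1 : Matrix (Fin n) (Fin n) ℝ) ⊗ₖ omega1).map Complex.ofReal)⁻¹ *
        (X.map Complex.ofReal)ᵀ =
      X.map Complex.ofReal *
        (VB.map Complex.ofReal +
          Complex.I • ((1 : Matrix (Fin n) (Fin n) ℝ) ⊗ₖ omega1).map Complex.ofReal)⁻¹ *
        (X.map Complex.ofReal)ᵀ ∧
      ∀ i j, ((X.map Complex.ofReal *
          (VB.map Complex.ofReal -
            Complex.I • ((1 : Matrix (Fin n) (Fin n) ℝ) ⊗ₖ omega1).map Complex.ofReal)⁻¹ *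
          (X.map Complex.ofReal)ᵀ) i j).im = 0 := by
  -- single-mode facts
  have hzz : zeta1 * zeta1 = 1 := by
    ext i j; fin_cases i <;> fin_cases j <;> simp [zeta1, Matrix.mul_apply, Fin.sum_univ_two]
  have hzoz : zeta1 * omega1 * zeta1 = -omega1 := by
    ext i j; fin_cases i <;> fin_cases j <;>
      simp [zeta1, omega1, Matrix.mul_apply, Fin.sum_univ_two]
  have hzT : zeta1ᵀ = zeta1 := by
    ext i j; fin_cases i <;> fin_cases j <;> simp [zeta1]
  have hoT : omega1ᵀ = -omega1 := by
    ext i j; fin_cases i <;> fin_cases j <;> simp [omega1]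
  set Tr : Matrix (Fin n × Fin 2) (Fin n × Fin 2) ℝ :=
    (1 : Matrix (Fin n) (Fin n) ℝ) ⊗ₖ zeta1 with hTrdef
  set Om : Matrix (Fin n × Fin 2) (Fin n × Fin 2) ℝ :=
    (1 : Matrix (Fin n) (Fin n) ℝ) ⊗ₖ omega1 with hOmdef
  have hTT : Tr * Tr = 1 := by
    rw [hTrdef, ← Matrix.mul_kronecker_mul, hzz, one_mul, Matrix.one_kronecker_one]
  have hTrT : Trᵀ = Tr := by
    rw [hTrdef, ← Matrix.kroneckerMap_transpose, hzT, Matrix.transpose_one]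
  have hTOT : Tr * Om * Tr = -Om := by
    rw [hTrdef, hOmdef, ← Matrix.mul_kronecker_mul, ← Matrix.mul_kronecker_mul, one_mul,
      one_mul, hzoz]
    ext i j
    simp [mul_neg]
  -- complexify
  set f : ℝ →+* ℂ := Complex.ofRealHom with hf
  have hfc : (Complex.ofReal : ℝ → ℂ) = f := rfl
  set Xc := X.map Complex.ofReal with hXc
  set Vc := VB.map Complex.ofReal with hVc
  set Oc := Om.map Complex.ofReal with hOc
  set Tc := Tr.map Complex.ofReal with hTc
  have hmapneg : ∀ (A : Matrix (Fin n × Fin 2) (Fin n × Fin 2) ℝ),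
      (-A).map Complex.ofReal = -(A.map Complex.ofReal) := fun A => by
    ext i j; simp
  have hmap : ∀ (A B : Matrix (Fin n × Fin 2) (Fin n × Fin 2) ℝ),
      (A * B).map Complex.ofReal = A.map Complex.ofReal * B.map Complex.ofReal := fun A B => by
    rw [hfc]; exact Matrix.map_mul
  have hTTc : Tc * Tc = 1 := by
    rw [hTc, ← hmap, hTT, hfc, Matrix.map_one f f.map_zero f.map_one]
  have hTcT : Tcᵀ = Tc := by rw [hTc, ← Matrix.transpose_map, hTrT]
  have hTOTc : Tc * Oc * Tc = -Oc := by
    rw [hTc, hOc, ← hmap, ← hmap, hTOT, hmapneg _]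
  have hVcT : Vcᵀ = Vc := by rw [hVc, ← Matrix.transpose_map, hVB.eq]
  have hOcT : Ocᵀ = -Oc := by
    rw [hOc, ← Matrix.transpose_map]
    rw [hOmdef, ← Matrix.kroneckerMap_transpose, hoT, Matrix.transpose_one]
    have : (1 : Matrix (Fin n) (Fin n) ℝ) ⊗ₖ (-omega1) = -((1 : Matrix (Fin n) (Fin n) ℝ) ⊗ₖ omega1) := by
      ext i j; simp [mul_neg]
    rw [this, ← hOmdef, hmapneg _]
  have hVcc : Tc * Vc * Tc = Vc := by rw [hTc, hVc, ← hmap, ← hmap, hV]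
  have hXcc : Xc * Tc = Xc := by
    rw [hXc, hTc, hfc]; rw [← Matrix.map_mul]; rw [← hfc, hX]
  set A := Vc - Complex.I • Oc with hA
  set B := Vc + Complex.I • Oc with hB
  have hTAT : Tc * A * Tc = B := by
    rw [hA, hB, Matrix.mul_sub, Matrix.sub_mul, hVcc, Matrix.mul_smul, Matrix.smul_mul, hTOTc,
      smul_neg, sub_neg_eq_add]
  have hdetB : IsUnit B.det := by
    rw [← hTAT, Matrix.det_mul, Matrix.det_mul]
    have hdetT : Tc.det * Tc.det = 1 := by
      rw [← Matrix.det_mul, hTTc, Matrix.det_one]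
    have : Tc.det * A.det * Tc.det = A.det * (Tc.det * Tc.det) := by ring
    rw [this, hdetT, mul_one]
    exact hinv
  have hATc : A * Tc = Tc * B := by
    calc A * Tc = (Tc * Tc) * (A * Tc) := by rw [hTTc, one_mul]
    _ = Tc * (Tc * A * Tc) := by simp only [Matrix.mul_assoc]
    _ = Tc * B := by rw [hTAT]
  have hAinv : A⁻¹ = Tc * B⁻¹ * Tc := by
    apply Matrix.inv_eq_right_inv
    calc A * (Tc * B⁻¹ * Tc) = (A * Tc) * B⁻¹ * Tc := by simp only [Matrix.mul_assoc]
    _ = Tc * (B * B⁻¹) * Tc := by rw [hATc]; simp only [Matrix.mul_assoc]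
    _ = Tc * Tc := by rw [Matrix.mul_nonsing_inv _ hdetB, Matrix.mul_one]
    _ = 1 := hTTc
  have hTXcT : Tc * Xcᵀ = Xcᵀ := by
    have := congrArg Matrix.transpose hXcc
    rwa [Matrix.transpose_mul, hTcT] at this
  have main : Xc * A⁻¹ * Xcᵀ = Xc * B⁻¹ * Xcᵀ := by
    rw [hAinv]
    calc Xc * (Tc * B⁻¹ * Tc) * Xcᵀ
        = (Xc * Tc) * B⁻¹ * (Tc * Xcᵀ) := by simp only [Matrix.mul_assoc]
      _ = Xc * B⁻¹ * Xcᵀ := by rw [hXcc, hTXcT]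
  refine ⟨main, ?_⟩
  -- reality
  have hAT : Aᵀ = B := by
    rw [hA, hB, Matrix.transpose_sub, Matrix.transpose_smul, hVcT, hOcT, smul_neg,
      sub_neg_eq_add]
  have hXcH : Xcᴴ = Xcᵀ := by
    ext i j; simp [hXc, Matrix.conjTranspose_apply, Complex.conj_ofReal]
  have hVcH : Vcᴴ = Vc := by
    ext i j
    simp only [hVc, Matrix.conjTranspose_apply, Matrix.map_apply, Complex.star_def,
      Complex.conj_ofReal]
    exact_mod_cast (congrFun (congrFun hVB.eq j) i).symm
  have hOcH : Ocᴴ = -Oc := by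
    have h1 : Ocᴴ = Ocᵀ := by
      ext i j
      simp [hOc, Matrix.conjTranspose_apply, Complex.conj_ofReal]
    rw [h1, hOcT]
  have hAH : Aᴴ = A := by
    rw [hA, Matrix.conjTranspose_sub, Matrix.conjTranspose_smul, hVcH, hOcH, smul_neg,
      Complex.star_def, Complex.conj_I, neg_smul, neg_neg]
  have hXtH : (Xcᵀ)ᴴ = Xc := by
    ext i j
    simp [hXc, Matrix.conjTranspose_apply, Complex.conj_ofReal]
  set M := Xc * A⁻¹ * Xcᵀ with hM
  have hMT : Mᵀ = M := by
    rw [hM, Matrix.transpose_mul, Matrix.transpose_mul, Matrix.transpose_transpose,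
      Matrix.transpose_nonsing_inv, hAT, ← Matrix.mul_assoc]
    exact main.symm
  have hMH : Mᴴ = M := by
    rw [hM, Matrix.conjTranspose_mul, Matrix.conjTranspose_mul, hXtH,
      Matrix.conjTranspose_nonsing_inv, hAH, hXcH, ← Matrix.mul_assoc]
  intro i j
  have hc : (starRingEnd ℂ) (M i j) = M i j := by
    have h1 : (starRingEnd ℂ) (M i j) = Mᴴ j i := rfl
    have h2 : M j i = Mᵀ i j := rfl
    rw [h1, hMH, h2, hMT]
  exact Complex.conj_eq_iff_im.mp hc
end
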